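/- Let F and T be entrywise nonnegative n × n real matrices with spectral radius of T strictly less than 1 (so that I − T is invertible), and set ℛ₀ = spectral radius of F(I − T)^{−1} and ρ = spectral radius of F + T. Then sign(ℛ₀ − 1) = sign(ρ − 1); that is, ρ > 1 if and only if ℛ₀ > 1, ρ = 1 if and only if ℛ₀ = 1, and ρ < 1 if and only if ℛ₀ < 1. -/

import Mathlib

open scoped ENNReal NNReal
open Filter Topology

set_option maxHeartbeats 1000000

namespace SignR0Aux

attribute [local instance] Matrix.linftyOpNormedRing Matrix.linftyOpNormedAlgebra
  Matrix.linftyOpNormedAddCommGroup Matrix.linftyOpNormedSpace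

variable {n : ℕ}

local notation "Mat" => Matrix (Fin n) (Fin n) ℝ

lemma ofReal_norm_eq_coe_nnnorm {E : Type*} [SeminormedAddCommGroup E] (x : E) :
    ENNReal.ofReal ‖x‖ = (‖x‖₊ : ℝ≥0∞) :=
  ENNReal.ofReal_eq_coe_nnreal _

/-- map to ℂ -/
noncomputable def mapC (M : Mat) : Matrix (Fin n) (Fin n) ℂ :=
  M.map (Complex.ofReal : ℝ → ℂ)

noncomputable def rho (M : Mat) : ℝ≥0∞ := spectralRadius ℂ (mapC M)

/-- entrywise nonneg -/
def nn (M : Mat) : Prop := ∀ i j, 0 ≤ M i j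

lemma mapC_mul (A B : Mat) : mapC (A * B) = mapC A * mapC B :=
  Matrix.map_mul (L := A) (M := B) (f := Complex.ofRealHom)

lemma mapC_one : mapC (1 : Mat) = 1 :=
  Matrix.map_one (Complex.ofReal : ℝ → ℂ) (by simp) (by simp)

lemma mapC_pow (M : Mat) : ∀ m : ℕ, mapC (M ^ m) = mapC M ^ m
  | 0 => by simpa using mapC_one
  | (m+1) => by rw [pow_succ, pow_succ, mapC_mul, mapC_pow M m]

lemma nnnorm_mapC (M : Mat) : ‖mapC M‖₊ = ‖M‖₊ := by
  rw [Matrix.linfty_opNNNorm_def, Matrix.linfty_opNNNorm_def]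
  congr 1; ext i; congr 1; ext j
  simp [mapC]

lemma norm_mapC (M : Mat) : ‖mapC M‖ = ‖M‖ := congrArg NNReal.toReal (nnnorm_mapC M)

/- order basics -/
lemma nn.mul {A B : Mat} (hA : nn A) (hB : nn B) : nn (A * B) := fun i j => by
  rw [Matrix.mul_apply]
  exact Finset.sum_nonneg fun l _ => mul_nonneg (hA i l) (hB l j)

lemma nn.pow {A : Mat} (hA : nn A) : ∀ m, nn (A ^ m)
  | 0 => fun i j => by
      by_cases h : i = j <;> simp [Matrix.one_apply, h]
  | (m+1) => by rw [pow_succ]; exact (hA.pow m).mul hA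

lemma nn.add {A B : Mat} (hA : nn A) (hB : nn B) : nn (A + B) := fun i j =>
  add_nonneg (hA i j) (hB i j)

lemma nn.smul {A : Mat} {c : ℝ} (hc : 0 ≤ c) (hA : nn A) : nn (c • A) := fun i j =>
  mul_nonneg hc (hA i j)

lemma mul_le_mul_mat {A A' B B' : Mat} (hA : nn A) (hB : nn B)
    (h1 : ∀ i j, A i j ≤ A' i j) (h2 : ∀ i j, B i j ≤ B' i j) :
    ∀ i j, (A * B) i j ≤ (A' * B') i j := fun i j => by
  rw [Matrix.mul_apply, Matrix.mul_apply]
  exact Finset.sum_le_sum fun l _ =>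
    mul_le_mul (h1 i l) (h2 l j) (hB l j) ((hA i l).trans (h1 i l))

lemma pow_le_pow_mat {A B : Mat} (hA : nn A) (h : ∀ i j, A i j ≤ B i j) :
    ∀ m, ∀ i j, (A ^ m) i j ≤ (B ^ m) i j
  | 0 => fun i j => le_refl _
  | (m+1) => by
      rw [pow_succ, pow_succ]
      exact mul_le_mul_mat (hA.pow m) hA (pow_le_pow_mat hA h m) h

/- norm lemmas -/
lemma entry_le_norm {M : Mat} (hM : nn M) (i j : Fin n) : M i j ≤ ‖M‖ := by
  have h1 : ‖M i j‖₊ ≤ ‖M‖₊ := by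
    rw [Matrix.linfty_opNNNorm_def]
    exact le_trans (Finset.single_le_sum (f := fun j => ‖M i j‖₊)
      (fun _ _ => zero_le) (Finset.mem_univ j))
      (Finset.le_sup (f := fun i => ∑ j, ‖M i j‖₊) (Finset.mem_univ i))
  calc M i j ≤ |M i j| := le_abs_self _
  _ = ‖M i j‖ := rfl
  _ ≤ ‖M‖ := h1

lemma norm_le_norm_mat {A B : Mat} (hA : nn A) (h : ∀ i j, A i j ≤ B i j) : ‖A‖ ≤ ‖B‖ := by
  have h1 : ‖A‖₊ ≤ ‖B‖₊ := by
    rw [Matrix.linfty_opNNNorm_def, Matrix.linfty_opNNNorm_def]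
    refine Finset.sup_mono_fun fun i _ => Finset.sum_le_sum fun j _ => ?_
    have : |A i j| ≤ |B i j| := by
      rw [abs_of_nonneg (hA i j), abs_of_nonneg ((hA i j).trans (h i j))]
      exact h i j
    exact this
  exact h1

/- ===================== Part B ===================== -/

lemma rho_lt_top [NeZero n] (M : Mat) : rho M < ∞ := by
  haveI : Nonempty (Fin n) := ⟨⟨0, Nat.pos_of_ne_zero (NeZero.ne n)⟩⟩
  exact lt_of_le_of_lt (spectrum.spectralRadius_le_nnnorm (𝕜 := ℂ) (a := mapC M)) ENNReal.coe_lt_top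

lemma tendsto_gelfand (M : Mat) :
    Tendsto (fun m : ℕ => (‖M ^ m‖₊ : ℝ≥0∞) ^ (1 / (m:ℝ))) atTop (𝓝 (rho M)) := by
  have h := spectrum.pow_nnnorm_pow_one_div_tendsto_nhds_spectralRadius (mapC M)
  refine Filter.Tendsto.congr (fun m => ?_) h
  rw [← mapC_pow, nnnorm_mapC]

lemma tendsto_rpow_one_div (C : ℝ) (hC : 0 < C) :
    Tendsto (fun m : ℕ => C ^ (1/(m:ℝ))) atTop (𝓝 1) := by
  have h0 : Tendsto (fun m : ℕ => 1/(m:ℝ)) atTop (𝓝 0) := tendsto_one_div_atTop_nhds_zero_nat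
  have h1 : Tendsto (fun m : ℕ => Real.exp (Real.log C * (1/(m:ℝ)))) atTop (𝓝 1) := by
    have h2 : Tendsto (fun m : ℕ => Real.log C * (1/(m:ℝ))) atTop (𝓝 0) := by
      simpa using h0.const_mul (Real.log C)
    simpa [Function.comp_def] using (Real.continuous_exp.continuousAt (x := 0)).tendsto.comp h2
  refine h1.congr fun m => ?_
  rw [Real.rpow_def_of_pos hC]

lemma rho_le_of_pow_norm_le {M : Mat} {C c : ℝ} (hC : 1 ≤ C) (hc : 0 ≤ c)
    (h : ∀ m : ℕ, ‖M ^ m‖ ≤ C * c ^ m) : rho M ≤ ENNReal.ofReal c := by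
  have hC0 : 0 < C := lt_of_lt_of_le one_pos hC
  have hR : Tendsto (fun m : ℕ => ENNReal.ofReal (C ^ (1/(m:ℝ)) * c)) atTop
      (𝓝 (ENNReal.ofReal c)) := by
    have h2 : Tendsto (fun m : ℕ => C ^ (1/(m:ℝ)) * c) atTop (𝓝 c) := by
      simpa using (tendsto_rpow_one_div C hC0).mul_const c
    exact (ENNReal.continuous_ofReal.continuousAt.tendsto).comp h2
  refine le_of_tendsto_of_tendsto (tendsto_gelfand M) hR ?_
  filter_upwards [eventually_ge_atTop 1] with m hm
  have hm0 : (m:ℝ) ≠ 0 := by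
    have : (1:ℝ) ≤ (m:ℝ) := by exact_mod_cast hm
    linarith
  have hnn : (‖M ^ m‖₊ : ℝ≥0∞) = ENNReal.ofReal ‖M ^ m‖ :=
    (ofReal_norm_eq_coe_nnnorm _).symm
  rw [hnn, ENNReal.ofReal_rpow_of_nonneg (norm_nonneg _) (by positivity)]
  refine ENNReal.ofReal_le_ofReal ?_
  calc ‖M ^ m‖ ^ (1/(m:ℝ)) ≤ (C * c ^ m) ^ (1/(m:ℝ)) :=
        Real.rpow_le_rpow (norm_nonneg _) (h m) (by positivity)
  _ = C ^ (1/(m:ℝ)) * c := by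
      rw [Real.mul_rpow hC0.le (by positivity), ← Real.rpow_natCast c m,
        ← Real.rpow_mul hc, mul_one_div_cancel hm0, Real.rpow_one]

lemma pow_norm_le_of_rho_lt {M : Mat} {r : ℝ} (hr : 0 < r) (h : rho M < ENNReal.ofReal r) :
    ∃ C : ℝ, 1 ≤ C ∧ ∀ m : ℕ, ‖M ^ m‖ ≤ C * r ^ m := by
  have hev : ∀ᶠ m : ℕ in atTop, (‖M ^ m‖₊ : ℝ≥0∞) ^ (1/(m:ℝ)) < ENNReal.ofReal r :=
    (tendsto_gelfand M).eventually_lt_const h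
  obtain ⟨N, hN⟩ := eventually_atTop.1 (hev.and (eventually_ge_atTop 1))
  have hbig : ∀ m, N ≤ m → ‖M ^ m‖ ≤ r ^ m := by
    intro m hm
    obtain ⟨h1, h2⟩ := hN m hm
    have hm0 : (m:ℝ) ≠ 0 := by
      have : (1:ℝ) ≤ (m:ℝ) := by exact_mod_cast h2
      linarith
    have hx : (‖M ^ m‖₊ : ℝ≥0∞) = ((‖M ^ m‖₊ : ℝ≥0∞) ^ (1/(m:ℝ))) ^ (m:ℕ) := by
      rw [← ENNReal.rpow_natCast (((‖M ^ m‖₊ : ℝ≥0∞)) ^ (1/(m:ℝ))) m, ← ENNReal.rpow_mul,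
        one_div, inv_mul_cancel₀ hm0, ENNReal.rpow_one]
    have hle : (‖M ^ m‖₊ : ℝ≥0∞) ≤ (ENNReal.ofReal r) ^ (m:ℕ) := by
      rw [hx]
      exact pow_le_pow_left₀ zero_le h1.le m
    rw [← ofReal_norm_eq_coe_nnnorm, ← ENNReal.ofReal_pow hr.le] at hle
    exact (ENNReal.ofReal_le_ofReal_iff (by positivity)).1 hle
  refine ⟨1 + ∑ m ∈ Finset.range N, ‖M ^ m‖ / r ^ m, ?_, ?_⟩
  · have : 0 ≤ ∑ m ∈ Finset.range N, ‖M ^ m‖ / r ^ m :=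
      Finset.sum_nonneg fun m _ => by positivity
    linarith
  · intro m
    have hrm : (0:ℝ) < r ^ m := by positivity
    rcases lt_or_ge m N with hm | hm
    · have h1 : ‖M ^ m‖ / r ^ m ≤ ∑ k ∈ Finset.range N, ‖M ^ k‖ / r ^ k :=
        Finset.single_le_sum (f := fun k => ‖M ^ k‖ / r ^ k)
          (fun k _ => by positivity) (Finset.mem_range.2 hm)
      have h2 : ‖M ^ m‖ / r ^ m ≤ 1 + ∑ k ∈ Finset.range N, ‖M ^ k‖ / r ^ k := by linarith
      calc ‖M ^ m‖ = ‖M ^ m‖ / r ^ m * r ^ m := by field_simp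
      _ ≤ (1 + ∑ k ∈ Finset.range N, ‖M ^ k‖ / r ^ k) * r ^ m :=
          mul_le_mul_of_nonneg_right h2 hrm.le
    · have h2 : (0:ℝ) ≤ ∑ k ∈ Finset.range N, ‖M ^ k‖ / r ^ k :=
        Finset.sum_nonneg fun k _ => by positivity
      calc ‖M ^ m‖ ≤ r ^ m := hbig m hm
      _ = 1 * r ^ m := (one_mul _).symm
      _ ≤ (1 + ∑ k ∈ Finset.range N, ‖M ^ k‖ / r ^ k) * r ^ m :=
          mul_le_mul_of_nonneg_right (by linarith) hrm.le

lemma mulVec_mono {M : Mat} (hM : nn M) {x y : Fin n → ℝ} (h : ∀ i, x i ≤ y i) :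
    ∀ i, (M.mulVec x) i ≤ (M.mulVec y) i := fun i => by
  simp only [Matrix.mulVec, dotProduct]
  exact Finset.sum_le_sum fun j _ => mul_le_mul_of_nonneg_left (h j) (hM i j)

lemma mulVec_nonneg {M : Mat} (hM : nn M) {x : Fin n → ℝ} (hx : ∀ i, 0 ≤ x i) :
    ∀ i, 0 ≤ (M.mulVec x) i := fun i => by
  simp only [Matrix.mulVec, dotProduct]
  exact Finset.sum_nonneg fun j _ => mul_nonneg (hM i j) (hx j)

lemma le_rho_of_vec {M : Mat} (hM : nn M) {w : Fin n → ℝ} (hw : ∀ i, 0 ≤ w i)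
    (hw0 : w ≠ 0) {μ : ℝ} (h : ∀ i, μ * w i ≤ (M.mulVec w) i) :
    ENNReal.ofReal μ ≤ rho M := by
  rcases le_or_gt μ 0 with hμ | hμ
  · simp [ENNReal.ofReal_eq_zero.2 hμ]
  by_contra hcon
  push_neg at hcon
  obtain ⟨r, _, hrlt, hrμ⟩ := (ENNReal.lt_iff_exists_real_btwn).1 hcon
  have hrμ' : r < μ := by
    by_contra hx
    push_neg at hx
    exact absurd (lt_of_lt_of_le hrμ (ENNReal.ofReal_le_ofReal hx)) (lt_irrefl _)
  set r' := max r (μ/2) with hr'def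
  have hr'0 : 0 < r' := lt_max_of_lt_right (by positivity)
  have hr'μ : r' < μ := max_lt hrμ' (by linarith)
  have hlt : rho M < ENNReal.ofReal r' :=
    lt_of_lt_of_le hrlt (ENNReal.ofReal_le_ofReal (le_max_left _ _))
  obtain ⟨C, hC1, hC⟩ := pow_norm_le_of_rho_lt hr'0 hlt
  obtain ⟨i0, hi0⟩ : ∃ i, w i ≠ 0 := Function.ne_iff.1 hw0
  have hi0' : 0 < w i0 := (hw i0).lt_of_ne (Ne.symm hi0)
  set W := ∑ j, w j with hWdef
  have hW : 0 < W :=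
    lt_of_lt_of_le hi0' (Finset.single_le_sum (fun j _ => hw j) (Finset.mem_univ i0))
  have key : ∀ m : ℕ, ∀ i, μ ^ m * w i ≤ ((M ^ m).mulVec w) i := by
    intro m
    induction m with
    | zero => intro i; simp [Matrix.one_mulVec]
    | succ m ih =>
      intro i
      have h1 : ∀ j, μ ^ m * w j ≤ ((M ^ m).mulVec w) j := ih
      have h2 : (M.mulVec fun j => μ ^ m * w j) i ≤ (M.mulVec ((M ^ m).mulVec w)) i :=
        mulVec_mono hM h1 i
      have h3 : (M.mulVec fun j => μ ^ m * w j) i = μ ^ m * (M.mulVec w) i := by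
        simp only [Matrix.mulVec, dotProduct, Finset.mul_sum]
        exact Finset.sum_congr rfl fun j _ => by ring
      have h4 : μ ^ (m+1) * w i ≤ μ ^ m * (M.mulVec w) i := by
        have := mul_le_mul_of_nonneg_left (h i) (pow_nonneg hμ.le m)
        calc μ ^ (m+1) * w i = μ ^ m * (μ * w i) := by ring
        _ ≤ μ ^ m * (M.mulVec w) i := this
      calc μ ^ (m+1) * w i ≤ μ ^ m * (M.mulVec w) i := h4
      _ = (M.mulVec fun j => μ ^ m * w j) i := h3.symm
      _ ≤ (M.mulVec ((M ^ m).mulVec w)) i := h2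
      _ = ((M ^ (m+1)).mulVec w) i := by rw [Matrix.mulVec_mulVec, ← pow_succ']
  have key2 : ∀ m : ℕ, μ ^ m * w i0 ≤ C * r' ^ m * W := by
    intro m
    have h1 : ((M ^ m).mulVec w) i0 = ∑ j, (M ^ m) i0 j * w j := by
      simp [Matrix.mulVec, dotProduct]
    have h2 : ∑ j, (M ^ m) i0 j * w j ≤ ∑ j, ‖M ^ m‖ * w j :=
      Finset.sum_le_sum fun j _ =>
        mul_le_mul_of_nonneg_right (entry_le_norm (hM.pow m) i0 j) (hw j)
    have h3 : ∑ j, ‖M ^ m‖ * w j = ‖M ^ m‖ * W := by rw [hWdef, Finset.mul_sum]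
    calc μ ^ m * w i0 ≤ ((M ^ m).mulVec w) i0 := key m i0
    _ ≤ ‖M ^ m‖ * W := by rw [h1] at *; exact le_trans h2 (le_of_eq h3)
    _ ≤ C * r' ^ m * W := mul_le_mul_of_nonneg_right (hC m) hW.le
  obtain ⟨m, hm⟩ := pow_unbounded_of_one_lt (C * W / w i0) ((one_lt_div hr'0).2 hr'μ)
  rw [div_pow] at hm
  have h5 : C * W / w i0 * r' ^ m < μ ^ m := by
    rw [div_lt_div_iff₀ (by positivity) (by positivity)] at hm
    rw [div_mul_eq_mul_div, div_lt_iff₀ (by positivity)]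
    linarith [hm]
  have h6 : μ ^ m * w i0 ≤ C * W * r' ^ m := by
    have := key2 m
    calc μ ^ m * w i0 ≤ C * r' ^ m * W := this
    _ = C * W * r' ^ m := by ring
  have h7 : μ ^ m * w i0 < μ ^ m * w i0 := by
    calc μ ^ m * w i0 ≤ C * W * r' ^ m := h6
    _ = C * W / w i0 * r' ^ m * w i0 := by field_simp
    _ < μ ^ m * w i0 := mul_lt_mul_of_pos_right h5 hi0'
  exact lt_irrefl _ h7

lemma rho_mono {A B : Mat} (hA : nn A) (h : ∀ i j, A i j ≤ B i j) : rho A ≤ rho B := by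
  by_contra hcon
  push_neg at hcon
  obtain ⟨r, _, hrlt, hrA⟩ := (ENNReal.lt_iff_exists_real_btwn).1 hcon
  have hr0 : 0 < r := ENNReal.ofReal_pos.1 (lt_of_le_of_lt zero_le hrlt)
  obtain ⟨C, hC1, hC⟩ := pow_norm_le_of_rho_lt hr0 hrlt
  have hA' : ∀ m, ‖A ^ m‖ ≤ C * r ^ m := fun m =>
    le_trans (norm_le_norm_mat (hA.pow m) (pow_le_pow_mat hA h m)) (hC m)
  exact absurd (lt_of_le_of_lt (rho_le_of_pow_norm_le hC1 hr0.le hA') hrA) (lt_irrefl _)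

/- ===================== Part C ===================== -/

noncomputable def matGeom (M : Mat) : Mat := Matrix.of fun i j => ∑' m : ℕ, (M ^ m) i j

lemma matGeom_apply (M : Mat) (i j : Fin n) : matGeom M i j = ∑' m : ℕ, (M ^ m) i j := rfl

section Geom

variable {M : Matrix (Fin n) (Fin n) ℝ} {C θ : ℝ} (hM : nn M) (hθ0 : 0 ≤ θ) (hθ1 : θ < 1)
  (hb : ∀ m : ℕ, ‖M ^ m‖ ≤ C * θ ^ m)

include hM hθ0 hθ1 hb

lemma geom_summable (i j : Fin n) : Summable fun m : ℕ => (M ^ m) i j :=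
  Summable.of_nonneg_of_le (fun m => (hM.pow m) i j)
    (fun m => le_trans (entry_le_norm (hM.pow m) i j) (hb m))
    ((summable_geometric_of_lt_one hθ0 hθ1).mul_left C)

lemma matGeom_nn : nn (matGeom M) := fun i j => tsum_nonneg fun m => (hM.pow m) i j

lemma partial_le_matGeom (N : ℕ) (i j : Fin n) :
    ∑ m ∈ Finset.range N, (M ^ m) i j ≤ matGeom M i j :=
  Summable.sum_le_tsum _ (fun m _ => (hM.pow m) i j) (geom_summable hM hθ0 hθ1 hb i j)

lemma one_le_matGeom_diag (i : Fin n) : 1 ≤ matGeom M i i := by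
  have h := partial_le_matGeom hM hθ0 hθ1 hb 1 i i
  simpa [Matrix.one_apply] using h

lemma matGeom_entry_le (i j : Fin n) : matGeom M i j ≤ C * (1 - θ)⁻¹ := by
  rw [matGeom_apply, ← tsum_geometric_of_lt_one hθ0 hθ1, ← tsum_mul_left]
  exact Summable.tsum_le_tsum
    (fun m => le_trans (entry_le_norm (hM.pow m) i j) (hb m))
    (geom_summable hM hθ0 hθ1 hb i j)
    ((summable_geometric_of_lt_one hθ0 hθ1).mul_left C)

lemma mul_matGeom_entry (i j : Fin n) :
    (M * matGeom M) i j = matGeom M i j - (1 : Mat) i j := by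
  have hsum : ∀ l j : Fin n, Summable fun m : ℕ => (M ^ m) l j :=
    fun l j => geom_summable hM hθ0 hθ1 hb l j
  have h4 : ∀ m : ℕ, ∑ l, M i l * (M ^ m) l j = (M ^ (m+1)) i j := fun m => by
    rw [pow_succ']; simp [Matrix.mul_apply]
  calc (M * matGeom M) i j = ∑ l, M i l * ∑' m, (M ^ m) l j := by
        simp [Matrix.mul_apply, matGeom_apply]
  _ = ∑ l, ∑' m : ℕ, M i l * (M ^ m) l j := by
        exact Finset.sum_congr rfl fun l _ => tsum_mul_left.symm
  _ = ∑' m : ℕ, ∑ l, M i l * (M ^ m) l j :=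
        (Summable.tsum_finsetSum (fun l _ => (hsum l j).mul_left _)).symm
  _ = ∑' m : ℕ, (M ^ (m+1)) i j := by
        exact tsum_congr fun m => h4 m
  _ = matGeom M i j - (1 : Mat) i j := by
        have h5 := Summable.tsum_eq_zero_add (hsum i j)
        have h7 : (M ^ 0) i j = (1 : Mat) i j := by simp
        rw [h7] at h5
        rw [matGeom_apply]
        linarith [h5]

lemma matGeom_mul_entry (i j : Fin n) :
    (matGeom M * M) i j = matGeom M i j - (1 : Mat) i j := by
  have hsum : ∀ l j : Fin n, Summable fun m : ℕ => (M ^ m) l j :=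
    fun l j => geom_summable hM hθ0 hθ1 hb l j
  have h4 : ∀ m : ℕ, ∑ l, (M ^ m) i l * M l j = (M ^ (m+1)) i j := fun m => by
    rw [pow_succ]; simp [Matrix.mul_apply]
  calc (matGeom M * M) i j = ∑ l, (∑' m, (M ^ m) i l) * M l j := by
        simp [Matrix.mul_apply, matGeom_apply]
  _ = ∑ l, ∑' m : ℕ, (M ^ m) i l * M l j := by
        exact Finset.sum_congr rfl fun l _ => tsum_mul_right.symm
  _ = ∑' m : ℕ, ∑ l, (M ^ m) i l * M l j :=
        (Summable.tsum_finsetSum (fun l _ => (hsum i l).mul_right _)).symm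
  _ = ∑' m : ℕ, (M ^ (m+1)) i j := by
        exact tsum_congr fun m => h4 m
  _ = matGeom M i j - (1 : Mat) i j := by
        have h5 := Summable.tsum_eq_zero_add (hsum i j)
        have h7 : (M ^ 0) i j = (1 : Mat) i j := by simp
        rw [h7] at h5
        rw [matGeom_apply]
        linarith [h5]

lemma one_sub_mul_matGeom : (1 - M) * matGeom M = 1 := by
  ext i j
  rw [Matrix.sub_mul, Matrix.one_mul, Matrix.sub_apply, mul_matGeom_entry hM hθ0 hθ1 hb]
  ring

lemma matGeom_mul_one_sub : matGeom M * (1 - M) = 1 := by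
  ext i j
  rw [Matrix.mul_sub, Matrix.mul_one, Matrix.sub_apply, matGeom_mul_entry hM hθ0 hθ1 hb]
  ring

end Geom

lemma exists_geom {M : Mat} (h : rho M < 1) :
    ∃ C θ : ℝ, 1 ≤ C ∧ 0 < θ ∧ θ < 1 ∧ ∀ m : ℕ, ‖M ^ m‖ ≤ C * θ ^ m := by
  obtain ⟨r, hr0, hrlt, hr1⟩ := (ENNReal.lt_iff_exists_real_btwn).1 h
  have hr1' : r < 1 := by
    by_contra hx
    push_neg at hx
    rw [← ENNReal.ofReal_one] at hr1
    exact absurd (lt_of_lt_of_le hr1 (ENNReal.ofReal_le_ofReal hx)) (lt_irrefl _)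
  set θ := max r (1/2) with hθdef
  have hθ0 : 0 < θ := lt_max_of_lt_right one_half_pos
  have hθ1 : θ < 1 := max_lt hr1' one_half_lt_one
  have hlt : rho M < ENNReal.ofReal θ :=
    lt_of_lt_of_le hrlt (ENNReal.ofReal_le_ofReal (le_max_left _ _))
  obtain ⟨C, hC1, hC⟩ := pow_norm_le_of_rho_lt hθ0 hlt
  exact ⟨C, θ, hC1, hθ0, hθ1, hC⟩

lemma exists_eigen [NeZero n] {M : Mat} (hM : nn M) :
    ∃ (μ : ℝ) (w : Fin n → ℝ), ENNReal.ofReal μ = rho M ∧ 0 ≤ μ ∧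
      (∀ i, 0 ≤ w i) ∧ w ≠ 0 ∧ ∀ i, μ * w i ≤ (M.mulVec w) i := by
  haveI : Nonempty (Fin n) := ⟨⟨0, Nat.pos_of_ne_zero (NeZero.ne n)⟩⟩
  obtain ⟨z, hz, hznorm⟩ := spectrum.exists_nnnorm_eq_spectralRadius (mapC M)
  have hdet : (z • (1 : Matrix (Fin n) (Fin n) ℂ) - mapC M).det = 0 := by
    rw [spectrum.mem_iff, Algebra.algebraMap_eq_smul_one] at hz
    by_contra hd
    exact hz ((Matrix.isUnit_iff_isUnit_det _).2 (isUnit_iff_ne_zero.2 hd))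
  obtain ⟨v, hv0, hv⟩ := (Matrix.exists_mulVec_eq_zero_iff).2 hdet
  have hMv : (mapC M).mulVec v = z • v := by
    rw [Matrix.sub_mulVec, Matrix.smul_mulVec, Matrix.one_mulVec] at hv
    exact (sub_eq_zero.1 hv).symm
  refine ⟨‖z‖, fun i => ‖v i‖, ?_, norm_nonneg _, fun i => norm_nonneg _, ?_, ?_⟩
  · rw [rho, ← hznorm]
    exact ofReal_norm_eq_coe_nnnorm z
  · intro hw
    apply hv0
    funext i
    have := congrFun hw i
    simpa using this
  · intro i
    have h1 : ((mapC M).mulVec v) i = z * v i := by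
      rw [hMv]; simp
    have h3 : ‖((mapC M).mulVec v) i‖ ≤ (M.mulVec (fun j => ‖v j‖)) i := by
      simp only [Matrix.mulVec, dotProduct, mapC, Matrix.map_apply]
      refine le_trans (norm_sum_le _ _) (Finset.sum_le_sum fun j _ => ?_)
      rw [norm_mul, Complex.norm_real, Real.norm_eq_abs, abs_of_nonneg (hM i j)]
    calc ‖z‖ * ‖v i‖ = ‖((mapC M).mulVec v) i‖ := by rw [h1, norm_mul]
    _ ≤ _ := h3

/- ===================== Part D ===================== -/

lemma row_sum_le_norm {M : Matrix (Fin n) (Fin n) ℝ} (hM : nn M) (i : Fin n) :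
    ∑ j, M i j ≤ ‖M‖ := by
  have h1 : (∑ j, ‖M i j‖₊ : ℝ≥0) ≤ ‖M‖₊ := by
    rw [Matrix.linfty_opNNNorm_def]
    exact Finset.le_sup (f := fun i => ∑ j, ‖M i j‖₊) (Finset.mem_univ i)
  calc ∑ j, M i j = ∑ j, ((‖M i j‖₊ : ℝ≥0) : ℝ) := by
        refine Finset.sum_congr rfl fun j _ => ?_
        rw [coe_nnnorm, Real.norm_eq_abs, abs_of_nonneg (hM i j)]
  _ = ((∑ j, ‖M i j‖₊ : ℝ≥0) : ℝ) := by rw [NNReal.coe_sum]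
  _ ≤ ((‖M‖₊ : ℝ≥0) : ℝ) := by exact_mod_cast h1

lemma one_sub_pow_le {s : ℝ} (hs0 : 0 ≤ s) (hs1 : s ≤ 1) :
    ∀ m : ℕ, 1 - s ^ (m+1) ≤ (m+1) * (1-s)
  | 0 => by norm_num
  | (m+1) => by
      have ih := one_sub_pow_le hs0 hs1 m
      have hp : s ^ (m+1) ≤ 1 := pow_le_one₀ hs0 hs1
      have h1 : s * (1 - s ^ (m+1)) ≤ 1 - s ^ (m+1) := by nlinarith
      have h2 : 1 - s ^ (m+2) = (1 - s) + s * (1 - s ^ (m+1)) := by ring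
      push_cast
      nlinarith

section Main

variable [NeZero n] {F T : Matrix (Fin n) (Fin n) ℝ}

/-- `ℛ₀ ≥ 1 → ρ ≥ 1` -/
lemma claim1fwd (hF : nn F) (hT : nn T) (hrhoT : rho T < 1)
    (h : 1 ≤ rho (F * matGeom T)) : 1 ≤ rho (F + T) := by
  obtain ⟨C, θ, hC1, hθ0, hθ1, hb⟩ := exists_geom hrhoT
  have hQnn : nn (matGeom T) := matGeom_nn hT hθ0.le hθ1 hb
  have hKnn : nn (F * matGeom T) := hF.mul hQnn
  obtain ⟨μ, w, hμrho, hμ0, hw, hw0, hKw⟩ := exists_eigen hKnn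
  have hμ1 : 1 ≤ μ := by
    rw [← hμrho] at h
    exact ENNReal.one_le_ofReal.1 h
  set u := (matGeom T).mulVec w with hudef
  have hu0 : ∀ i, 0 ≤ u i := mulVec_nonneg hQnn hw
  have huw : ∀ i, w i ≤ u i := by
    intro i
    have h1 : matGeom T i i * w i ≤ u i := by
      rw [hudef]
      simp only [Matrix.mulVec, dotProduct]
      exact Finset.single_le_sum (f := fun l => matGeom T i l * w l)
        (fun l _ => mul_nonneg (hQnn i l) (hw l)) (Finset.mem_univ i)
    have h2 : w i ≤ matGeom T i i * w i :=
      le_mul_of_one_le_left (hw i) (one_le_matGeom_diag hT hθ0.le hθ1 hb i)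
    linarith
  have hune : u ≠ 0 := by
    obtain ⟨i0, hi0⟩ : ∃ i, w i ≠ 0 := Function.ne_iff.1 hw0
    have : 0 < u i0 := lt_of_lt_of_le ((hw i0).lt_of_ne (Ne.symm hi0)) (huw i0)
    intro hu
    rw [hu] at this
    exact lt_irrefl _ this
  have hKw' : ∀ i, w i ≤ (F.mulVec u) i := by
    intro i
    calc w i ≤ μ * w i := le_mul_of_one_le_left (hw i) hμ1
    _ ≤ ((F * matGeom T).mulVec w) i := hKw i
    _ = (F.mulVec u) i := by rw [hudef, Matrix.mulVec_mulVec]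
  have hTu : ∀ i, (T.mulVec u) i = u i - w i := by
    intro i
    have h1 : ((1 - T).mulVec u) i = w i := by
      rw [hudef, Matrix.mulVec_mulVec, one_sub_mul_matGeom hT hθ0.le hθ1 hb,
        Matrix.one_mulVec]
    rw [Matrix.sub_mulVec, Matrix.one_mulVec] at h1
    have : u i - (T.mulVec u) i = w i := h1
    linarith
  have hAu : ∀ i, 1 * u i ≤ ((F + T).mulVec u) i := by
    intro i
    rw [Matrix.add_mulVec, one_mul]
    have h1 := hKw' i
    have h2 := hTu i
    have : ((F.mulVec u) + (T.mulVec u)) i = (F.mulVec u) i + (T.mulVec u) i := rfl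
    rw [this, h2]
    linarith
  have := le_rho_of_vec (hF.add hT) hu0 hune hAu
  simpa using this

/-- `ℛ₀ < 1 → ρ < 1` -/
lemma claim1rev (hF : nn F) (hT : nn T) (hrhoT : rho T < 1)
    (h : rho (F * matGeom T) < 1) : rho (F + T) < 1 := by
  haveI : Nonempty (Fin n) := ⟨⟨0, Nat.pos_of_ne_zero (NeZero.ne n)⟩⟩
  obtain ⟨C, θ, hC1, hθ0, hθ1, hb⟩ := exists_geom hrhoT
  have hQnn : nn (matGeom T) := matGeom_nn hT hθ0.le hθ1 hb
  obtain ⟨C2, θ2, hC21, hθ20, hθ21, hb2⟩ := exists_geom h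
  -- bound the spectral radius of L = matGeom T * F
  have hLpow : ∀ m : ℕ, (matGeom T * F) ^ (m+1) = matGeom T * (F * matGeom T) ^ m * F := by
    intro m
    induction m with
    | zero => simp [mul_assoc]
    | succ m ih =>
      rw [pow_succ, ih, pow_succ]
      noncomm_ring
  have hrhoL : rho (matGeom T * F) ≤ ENNReal.ofReal θ2 := by
    refine rho_le_of_pow_norm_le (C := 1 + ‖matGeom T‖ * C2 * ‖F‖ / θ2) ?_ hθ20.le ?_
    · have : 0 ≤ ‖matGeom T‖ * C2 * ‖F‖ / θ2 := by positivity
      linarith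
    · intro m
      match m with
      | 0 =>
        simp only [pow_zero]
        rw [norm_one]
        have h1 : 0 ≤ ‖matGeom T‖ * C2 * ‖F‖ / θ2 := by positivity
        linarith
      | (m+1) =>
        have h1 : ‖(matGeom T * F) ^ (m+1)‖ ≤ ‖matGeom T‖ * ‖(F * matGeom T) ^ m‖ * ‖F‖ := by
          rw [hLpow m]
          calc ‖matGeom T * (F * matGeom T) ^ m * F‖
              ≤ ‖matGeom T * (F * matGeom T) ^ m‖ * ‖F‖ := norm_mul_le _ _
          _ ≤ ‖matGeom T‖ * ‖(F * matGeom T) ^ m‖ * ‖F‖ :=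
              mul_le_mul_of_nonneg_right (norm_mul_le _ _) (norm_nonneg _)
        have h2 : ‖(F * matGeom T) ^ m‖ ≤ C2 * θ2 ^ m := hb2 m
        have h3 : ‖matGeom T‖ * (C2 * θ2 ^ m) * ‖F‖ =
            (‖matGeom T‖ * C2 * ‖F‖ / θ2) * θ2 ^ (m+1) := by
          field_simp
          ring
        have h4 : 0 ≤ θ2 ^ (m+1) := by positivity
        have h5 : 0 ≤ ‖matGeom T‖ * C2 * ‖F‖ / θ2 := by positivity
        calc ‖(matGeom T * F) ^ (m+1)‖ ≤ ‖matGeom T‖ * (C2 * θ2 ^ m) * ‖F‖ := by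
              refine le_trans h1 ?_
              refine mul_le_mul_of_nonneg_right ?_ (norm_nonneg _)
              exact mul_le_mul_of_nonneg_left h2 (norm_nonneg _)
        _ = (‖matGeom T‖ * C2 * ‖F‖ / θ2) * θ2 ^ (m+1) := h3
        _ ≤ (1 + ‖matGeom T‖ * C2 * ‖F‖ / θ2) * θ2 ^ (m+1) := by nlinarith
  by_contra hcon
  push_neg at hcon
  obtain ⟨μ, w, hμrho, hμ0, hw, hw0, hAw⟩ := exists_eigen (hF.add hT)
  have hμ1 : 1 ≤ μ := by
    rw [← hμrho] at hcon
    exact ENNReal.one_le_ofReal.1 hcon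
  have hLw : ∀ i, 1 * w i ≤ ((matGeom T * F).mulVec w) i := by
    intro i
    have hFw : ∀ i, w i - (T.mulVec w) i ≤ (F.mulVec w) i := by
      intro i
      have h1 := hAw i
      rw [Matrix.add_mulVec] at h1
      have h2 : ((F.mulVec w) + (T.mulVec w)) i = (F.mulVec w) i + (T.mulVec w) i := rfl
      rw [h2] at h1
      have h3 : w i ≤ μ * w i := le_mul_of_one_le_left (hw i) hμ1
      linarith
    have h4 : ((matGeom T).mulVec ((1 - T).mulVec w)) i ≤
        ((matGeom T).mulVec (F.mulVec w)) i := by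
      refine mulVec_mono hQnn (fun i => ?_) i
      rw [Matrix.sub_mulVec, Matrix.one_mulVec]
      exact hFw i
    rw [Matrix.mulVec_mulVec, Matrix.mulVec_mulVec,
      matGeom_mul_one_sub hT hθ0.le hθ1 hb, Matrix.one_mulVec] at h4
    rw [one_mul]
    exact h4
  have h5 := le_rho_of_vec (hQnn.mul hF) hw hw0 hLw
  rw [ENNReal.ofReal_one] at h5
  have h6 : (1 : ℝ≥0∞) ≤ ENNReal.ofReal θ2 := le_trans h5 hrhoL
  have h7 : ENNReal.ofReal θ2 < 1 := ENNReal.ofReal_lt_one.2 hθ21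
  exact absurd (lt_of_le_of_lt h6 h7) (lt_irrefl _)

/-- `ρ > 1 → ℛ₀ > 1` -/
lemma claim2fwd (hF : nn F) (hT : nn T) (hrhoT : rho T < 1)
    (h : 1 < rho (F + T)) : 1 < rho (F * matGeom T) := by
  haveI : Nonempty (Fin n) := ⟨⟨0, Nat.pos_of_ne_zero (NeZero.ne n)⟩⟩
  by_contra hcon
  push_neg at hcon
  obtain ⟨C, θ, hC1, hθ0, hθ1, hb⟩ := exists_geom hrhoT
  have hQnn : nn (matGeom T) := matGeom_nn hT hθ0.le hθ1 hb
  obtain ⟨μ, w, hμrho, hμ0, hw, hw0, hAw⟩ := exists_eigen (hF.add hT)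
  have hμ1 : 1 < μ := by
    rw [← hμrho] at h
    rw [← ENNReal.ofReal_one] at h
    exact (ENNReal.ofReal_lt_ofReal_iff_of_nonneg zero_le_one).1 h
  have hμpos : 0 < μ := lt_trans one_pos hμ1
  set X := μ⁻¹ • T with hXdef
  have hXnn : nn X := nn.smul (by positivity) hT
  have hXleT : ∀ i j, X i j ≤ T i j := by
    intro i j
    rw [hXdef, Matrix.smul_apply, smul_eq_mul]
    have h1 : μ⁻¹ ≤ 1 := by
      rw [inv_le_one_iff₀]; right; exact hμ1.le
    nlinarith [hT i j]
  have hrhoX : rho X < 1 := lt_of_le_of_lt (rho_mono hXnn hXleT) hrhoT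
  obtain ⟨CX, θX, hCX1, hθX0, hθX1, hbX⟩ := exists_geom hrhoX
  have hQXnn : nn (matGeom X) := matGeom_nn hXnn hθX0.le hθX1 hbX
  -- eigen-type lower bound for QX * F
  have hvec : ∀ i, μ * w i ≤ ((matGeom X * F).mulVec w) i := by
    intro i
    have hFw : ∀ i, μ * w i - (T.mulVec w) i ≤ (F.mulVec w) i := by
      intro i
      have h1 := hAw i
      rw [Matrix.add_mulVec] at h1
      have h2 : ((F.mulVec w) + (T.mulVec w)) i = (F.mulVec w) i + (T.mulVec w) i := rfl
      rw [h2] at h1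
      linarith
    have hlhs : ∀ i, ((matGeom X).mulVec (fun j => μ * w j - (T.mulVec w) j)) i = μ * w i := by
      intro i
      have hTX : T.mulVec w = μ • (X.mulVec w) := by
        rw [hXdef, Matrix.smul_mulVec, smul_smul, mul_inv_cancel₀ (ne_of_gt hμpos),
          one_smul]
      have h1 : (fun j => μ * w j - (T.mulVec w) j) = μ • ((1 - X).mulVec w) := by
        funext j
        rw [Matrix.sub_mulVec, Matrix.one_mulVec, hTX]
        simp [mul_sub]
      rw [h1, Matrix.mulVec_smul, Matrix.mulVec_mulVec,
        matGeom_mul_one_sub hXnn hθX0.le hθX1 hbX, Matrix.one_mulVec]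
      simp
    have h4 : ((matGeom X).mulVec (fun j => μ * w j - (T.mulVec w) j)) i ≤
        ((matGeom X).mulVec (F.mulVec w)) i := mulVec_mono hQXnn hFw i
    rw [hlhs i] at h4
    rw [Matrix.mulVec_mulVec] at h4
    exact h4
  have h5 := le_rho_of_vec (hQXnn.mul hF) hw hw0 hvec
  -- norm upper bound for QX * F
  set r := (1 + μ)/2 with hrdef
  have hr1 : 1 < r := by rw [hrdef]; linarith
  have hrμ : r < μ := by rw [hrdef]; linarith
  have hr0 : 0 < r := lt_trans one_pos hr1
  have hrhoK : rho (F * matGeom T) < ENNReal.ofReal r := by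
    refine lt_of_le_of_lt hcon ?_
    rw [← ENNReal.ofReal_one]
    exact (ENNReal.ofReal_lt_ofReal_iff_of_nonneg zero_le_one).2 hr1
  obtain ⟨CK, hCK1, hCK⟩ := pow_norm_le_of_rho_lt hr0 hrhoK
  -- QX ≤ Q entrywise
  have hQXQ : ∀ i j, matGeom X i j ≤ matGeom T i j := by
    intro i j
    rw [matGeom_apply, matGeom_apply]
    exact Summable.tsum_le_tsum (fun m => pow_le_pow_mat hXnn hXleT m i j)
      (geom_summable hXnn hθX0.le hθX1 hbX i j)
      (geom_summable hT hθ0.le hθ1 hb i j)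
  have hFQX : ∀ i j, (F * matGeom X) i j ≤ (F * matGeom T) i j :=
    mul_le_mul_mat hF hQXnn (fun i j => le_refl _) hQXQ
  have hpow : ∀ m : ℕ, ‖(F * matGeom X) ^ m‖ ≤ CK * r ^ m := fun m =>
    le_trans (norm_le_norm_mat ((hF.mul hQXnn).pow m)
      (pow_le_pow_mat (hF.mul hQXnn) hFQX m)) (hCK m)
  have hLpow : ∀ m : ℕ, (matGeom X * F) ^ (m+1) = matGeom X * (F * matGeom X) ^ m * F := by
    intro m
    induction m with
    | zero => simp [mul_assoc]
    | succ m ih =>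
      rw [pow_succ, ih, pow_succ]
      noncomm_ring
  have hrhoL : rho (matGeom X * F) ≤ ENNReal.ofReal r := by
    refine rho_le_of_pow_norm_le (C := 1 + ‖matGeom X‖ * CK * ‖F‖ / r) ?_ hr0.le ?_
    · have : 0 ≤ ‖matGeom X‖ * CK * ‖F‖ / r := by positivity
      linarith
    · intro m
      match m with
      | 0 =>
        simp only [pow_zero]
        rw [norm_one]
        have h1 : 0 ≤ ‖matGeom X‖ * CK * ‖F‖ / r := by positivity
        linarith
      | (m+1) =>
        have h1 : ‖(matGeom X * F) ^ (m+1)‖ ≤ ‖matGeom X‖ * ‖(F * matGeom X) ^ m‖ * ‖F‖ := by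
          rw [hLpow m]
          calc ‖matGeom X * (F * matGeom X) ^ m * F‖
              ≤ ‖matGeom X * (F * matGeom X) ^ m‖ * ‖F‖ := norm_mul_le _ _
          _ ≤ ‖matGeom X‖ * ‖(F * matGeom X) ^ m‖ * ‖F‖ :=
              mul_le_mul_of_nonneg_right (norm_mul_le _ _) (norm_nonneg _)
        have h3 : ‖matGeom X‖ * (CK * r ^ m) * ‖F‖ =
            (‖matGeom X‖ * CK * ‖F‖ / r) * r ^ (m+1) := by
          field_simp
          ring
        have h5 : 0 ≤ ‖matGeom X‖ * CK * ‖F‖ / r := by positivity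
        have h6 : 0 ≤ r ^ (m+1) := by positivity
        calc ‖(matGeom X * F) ^ (m+1)‖ ≤ ‖matGeom X‖ * (CK * r ^ m) * ‖F‖ := by
              refine le_trans h1 ?_
              refine mul_le_mul_of_nonneg_right ?_ (norm_nonneg _)
              exact mul_le_mul_of_nonneg_left (hpow m) (norm_nonneg _)
        _ = (‖matGeom X‖ * CK * ‖F‖ / r) * r ^ (m+1) := h3
        _ ≤ (1 + ‖matGeom X‖ * CK * ‖F‖ / r) * r ^ (m+1) := by nlinarith
  have h7 : ENNReal.ofReal μ ≤ ENNReal.ofReal r := le_trans h5 hrhoL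
  have h8 : ENNReal.ofReal r < ENNReal.ofReal μ :=
    (ENNReal.ofReal_lt_ofReal_iff hμpos).2 hrμ
  exact absurd (lt_of_le_of_lt h7 h8) (lt_irrefl _)

/-- `ℛ₀ > 1 → ρ > 1` -/
lemma claim2rev (hF : nn F) (hT : nn T) (hrhoT : rho T < 1)
    (h : 1 < rho (F * matGeom T)) : 1 < rho (F + T) := by
  haveI : Nonempty (Fin n) := ⟨⟨0, Nat.pos_of_ne_zero (NeZero.ne n)⟩⟩
  obtain ⟨C, θ, hC1, hθ0, hθ1, hb⟩ := exists_geom hrhoT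
  have hC0 : (0:ℝ) < C := lt_of_lt_of_le one_pos hC1
  have hQnn : nn (matGeom T) := matGeom_nn hT hθ0.le hθ1 hb
  have hKnn : nn (F * matGeom T) := hF.mul hQnn
  obtain ⟨μ, w, hμrho, hμ0, hw, hw0, hKw⟩ := exists_eigen hKnn
  have hμ1 : 1 < μ := by
    rw [← hμrho, ← ENNReal.ofReal_one] at h
    exact (ENNReal.ofReal_lt_ofReal_iff_of_nonneg zero_le_one).1 h
  set μ' := (1 + μ)/2 with hμ'def
  have hμ'1 : 1 < μ' := by rw [hμ'def]; linarith
  have hμ'μ : μ' < μ := by rw [hμ'def]; linarith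
  have hSsum : Summable (fun m : ℕ => ((m:ℝ)+1) * θ ^ m) := by
    have h1 : Summable (fun m : ℕ => (m:ℝ) ^ 1 * θ ^ m) :=
      summable_pow_mul_geometric_of_norm_lt_one 1
        (by rwa [Real.norm_eq_abs, abs_of_nonneg hθ0.le])
    have h2 : Summable (fun m : ℕ => θ ^ m) := summable_geometric_of_lt_one hθ0.le hθ1
    refine Summable.congr (h1.add h2) fun m => by push_cast; ring
  set Sθ := ∑' m : ℕ, ((m:ℝ)+1) * θ ^ m with hSθdef
  have hSθ0 : 0 ≤ Sθ := tsum_nonneg fun m => by positivity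
  set CE := C * Sθ * ‖F‖ with hCEdef
  have hCE0 : 0 ≤ CE := mul_nonneg (mul_nonneg hC0.le hSθ0) (norm_nonneg F)
  set W := ∑ j, w j with hWdef
  have hW0 : 0 ≤ W := Finset.sum_nonneg fun j _ => hw j
  obtain ⟨i0, hi0⟩ : ∃ i, w i ≠ 0 := Function.ne_iff.1 hw0
  have hwi0 : 0 < w i0 := (hw i0).lt_of_ne (Ne.symm hi0)
  set S := Finset.univ.filter (fun i => 0 < w i) with hSdef
  have hSne : S.Nonempty := ⟨i0, by simp [hSdef, hwi0]⟩
  set δ := S.inf' hSne w with hδdef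
  have hδpos : 0 < δ := by
    obtain ⟨i, hiS, hieq⟩ := Finset.exists_mem_eq_inf' hSne w
    rw [hδdef, hieq]
    exact (Finset.mem_filter.1 hiS).2
  have hδle : ∀ i, 0 < w i → δ ≤ w i := fun i hi =>
    Finset.inf'_le w (by simp [hSdef, hi])
  set d := min (1/2) ((μ - μ') * δ / (CE * W + 1)) with hddef
  have hd0 : 0 < d :=
    lt_min one_half_pos (div_pos (mul_pos (by linarith) hδpos) (by positivity))
  have hd1 : d < 1 := lt_of_le_of_lt (min_le_left _ _) one_half_lt_one
  set s := 1 - d with hsdef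
  have hs0 : 0 < s := by rw [hsdef]; linarith
  have hs1 : s < 1 := by rw [hsdef]; linarith
  have hsle1 : s ≤ 1 := hs1.le
  have hsTnn : nn (s • T) := nn.smul hs0.le hT
  have hbsT : ∀ m : ℕ, ‖(s • T) ^ m‖ ≤ C * θ ^ m := by
    intro m
    rw [smul_pow, norm_smul, Real.norm_eq_abs, abs_of_nonneg (pow_nonneg hs0.le m)]
    have h1 : s ^ m ≤ 1 := pow_le_one₀ hs0.le hsle1
    nlinarith [hb m, norm_nonneg (T ^ m), pow_nonneg hθ0.le m]
  have hQsnn : nn (matGeom (s • T)) := matGeom_nn hsTnn hθ0.le hθ1 hbsT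
  have hdiff : ∀ l j, 0 ≤ matGeom T l j - s * matGeom (s • T) l j ∧
      matGeom T l j - s * matGeom (s • T) l j ≤ (1 - s) * (C * Sθ) := by
    intro l j
    have hsumT : Summable fun m : ℕ => (T ^ m) l j := geom_summable hT hθ0.le hθ1 hb l j
    have hsumsT : Summable fun m : ℕ => ((s • T) ^ m) l j :=
      geom_summable hsTnn hθ0.le hθ1 hbsT l j
    have heq1 : s * matGeom (s • T) l j = ∑' m : ℕ, s ^ (m+1) * (T ^ m) l j := by
      rw [matGeom_apply, ← tsum_mul_left]
      refine tsum_congr fun m => ?_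
      rw [smul_pow, Matrix.smul_apply, smul_eq_mul]
      ring
    have hsum2 : Summable fun m : ℕ => s ^ (m+1) * (T ^ m) l j := by
      refine Summable.congr (hsumsT.mul_left s) fun m => ?_
      rw [smul_pow, Matrix.smul_apply, smul_eq_mul]; ring
    have heq2 : matGeom T l j - s * matGeom (s • T) l j
        = ∑' m : ℕ, (1 - s ^ (m+1)) * (T ^ m) l j := by
      rw [matGeom_apply, heq1, ← Summable.tsum_sub hsumT hsum2]
      exact tsum_congr fun m => by ring
    have hsum3 : Summable fun m : ℕ => (1 - s ^ (m+1)) * (T ^ m) l j :=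
      Summable.congr (hsumT.sub hsum2) fun m => by ring
    constructor
    · rw [heq2]
      refine tsum_nonneg fun m => ?_
      have h1 : s ^ (m+1) ≤ 1 := pow_le_one₀ hs0.le hsle1
      have h2 := (hT.pow m) l j
      nlinarith
    · rw [heq2]
      have hbound : ∀ m : ℕ, (1 - s ^ (m+1)) * (T ^ m) l j
          ≤ (1 - s) * C * (((m:ℝ)+1) * θ ^ m) := by
        intro m
        have h1 : 1 - s ^ (m+1) ≤ ((m:ℝ)+1) * (1 - s) := by
          have h1' := one_sub_pow_le hs0.le hsle1 m
          push_cast at h1' ⊢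
          linarith
        have h2 : (T ^ m) l j ≤ C * θ ^ m :=
          le_trans (entry_le_norm (hT.pow m) l j) (hb m)
        have h3 : 0 ≤ (T ^ m) l j := (hT.pow m) l j
        have h4 : 0 ≤ 1 - s ^ (m+1) := by
          have := pow_le_one₀ hs0.le hsle1 (n := m+1)
          linarith
        have h5 : 0 ≤ ((m:ℝ)+1) * (1-s) := by
          have : (0:ℝ) ≤ 1 - s := by linarith
          positivity
        nlinarith
      calc ∑' m : ℕ, (1 - s ^ (m+1)) * (T ^ m) l j
          ≤ ∑' m : ℕ, (1 - s) * C * (((m:ℝ)+1) * θ ^ m) :=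
            Summable.tsum_le_tsum hbound hsum3 (hSsum.mul_left _)
      _ = (1 - s) * (C * Sθ) := by rw [tsum_mul_left, hSθdef]; ring
  set Ks := (s • F) * matGeom (s • T) with hKsdef
  have hKs_eq : Ks = F * (s • matGeom (s • T)) := by
    rw [hKsdef, Matrix.smul_mul, Matrix.mul_smul]
  have hKsnn : nn Ks := (nn.smul hs0.le hF).mul hQsnn
  have hEntry : ∀ i j, (F * matGeom T) i j - Ks i j ≤ (1 - s) * CE ∧
      0 ≤ (F * matGeom T) i j - Ks i j := by
    intro i j
    have h1 : (F * matGeom T) i j - Ks i j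
        = ∑ l, F i l * (matGeom T l j - s * matGeom (s • T) l j) := by
      rw [hKs_eq, Matrix.mul_apply, Matrix.mul_apply, ← Finset.sum_sub_distrib]
      refine Finset.sum_congr rfl fun l _ => ?_
      rw [Matrix.smul_apply, smul_eq_mul]; ring
    constructor
    · rw [h1]
      have hs' : (0:ℝ) ≤ 1 - s := by linarith
      calc ∑ l, F i l * (matGeom T l j - s * matGeom (s • T) l j)
          ≤ ∑ l, F i l * ((1-s) * (C * Sθ)) :=
            Finset.sum_le_sum fun l _ =>
              mul_le_mul_of_nonneg_left ((hdiff l j).2) (hF i l)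
      _ = (∑ l, F i l) * ((1-s) * (C * Sθ)) := by rw [← Finset.sum_mul]
      _ ≤ ‖F‖ * ((1-s) * (C * Sθ)) :=
            mul_le_mul_of_nonneg_right (row_sum_le_norm hF i)
              (mul_nonneg hs' (mul_nonneg hC0.le hSθ0))
      _ = (1 - s) * CE := by rw [hCEdef]; ring
    · rw [h1]
      exact Finset.sum_nonneg fun l _ => mul_nonneg (hF i l) ((hdiff l j).1)
  have hvec : ∀ i, μ' * w i ≤ (Ks.mulVec w) i := by
    intro i
    rcases (hw i).lt_or_eq with hwi | hwi
    · have h1 : ((F * matGeom T).mulVec w) i - (Ks.mulVec w) i ≤ (1-s) * CE * W := by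
        have he : ((F * matGeom T).mulVec w) i - (Ks.mulVec w) i
            = ∑ j, ((F * matGeom T) i j - Ks i j) * w j := by
          simp only [Matrix.mulVec, dotProduct, ← Finset.sum_sub_distrib, sub_mul]
        rw [he]
        calc ∑ j, ((F * matGeom T) i j - Ks i j) * w j
            ≤ ∑ j, ((1-s) * CE) * w j :=
              Finset.sum_le_sum fun j _ =>
                mul_le_mul_of_nonneg_right ((hEntry i j).1) (hw j)
        _ = (1-s) * CE * W := by rw [← Finset.mul_sum, hWdef]
      have h2 : (1-s) * CE * W ≤ (μ - μ') * w i := by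
        have hdle : d ≤ (μ - μ') * δ / (CE * W + 1) := min_le_right _ _
        have h6 : 0 ≤ CE * W := mul_nonneg hCE0 hW0
        have hpos : (0:ℝ) < CE * W + 1 := by linarith
        have h3 : d * (CE * W + 1) ≤ (μ - μ') * δ := (le_div_iff₀ hpos).1 hdle
        have h4 : δ ≤ w i := hδle i hwi
        have h5 : (1:ℝ) - s = d := by rw [hsdef]; ring
        have h7 : 0 ≤ μ - μ' := by linarith
        have h8 : d * (CE * W) ≤ d * (CE * W + 1) := by nlinarith
        have h9 : (μ - μ') * δ ≤ (μ - μ') * w i := mul_le_mul_of_nonneg_left h4 h7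
        calc (1-s) * CE * W = d * (CE * W) := by rw [h5]; ring
        _ ≤ (μ - μ') * δ := le_trans h8 h3
        _ ≤ (μ - μ') * w i := h9
      have h8 := hKw i
      have h9 : μ * w i - (μ - μ') * w i = μ' * w i := by ring
      linarith
    · rw [← hwi, mul_zero]
      exact mulVec_nonneg hKsnn hw i
  have h5 := le_rho_of_vec hKsnn hw hw0 hvec
  have h6 : 1 ≤ rho Ks := by
    refine le_trans ?_ h5
    rw [← ENNReal.ofReal_one]
    exact ENNReal.ofReal_le_ofReal hμ'1.le
  have hrhosT : rho (s • T) < 1 := by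
    refine lt_of_le_of_lt (rho_mono hsTnn (fun i j => ?_)) hrhoT
    rw [Matrix.smul_apply, smul_eq_mul]
    nlinarith [hT i j]
  have h7 : 1 ≤ rho (s • F + s • T) :=
    claim1fwd (nn.smul hs0.le hF) hsTnn hrhosT (by rw [← hKsdef]; exact h6)
  rw [(smul_add s F T).symm] at h7
  by_contra hcon
  push_neg at hcon
  set r' := (1 + 1/s)/2 with hr'def
  have hs1' : 1 < 1/s := by
    rw [lt_div_iff₀ hs0]; linarith
  have hr'1 : 1 < r' := by rw [hr'def]; linarith
  have hr'inv : r' < 1/s := by rw [hr'def]; linarith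
  have hsr' : s * r' < 1 := by
    have := mul_lt_mul_of_pos_left hr'inv hs0
    rwa [mul_one_div, div_self (ne_of_gt hs0)] at this
  have hlt : rho (F + T) < ENNReal.ofReal r' := by
    refine lt_of_le_of_lt hcon ?_
    rw [← ENNReal.ofReal_one]
    exact (ENNReal.ofReal_lt_ofReal_iff_of_nonneg zero_le_one).2 hr'1
  obtain ⟨CA, hCA1, hCA⟩ := pow_norm_le_of_rho_lt (lt_trans one_pos hr'1) hlt
  have hbound : ∀ m : ℕ, ‖(s • (F+T)) ^ m‖ ≤ CA * (s * r') ^ m := by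
    intro m
    rw [smul_pow, norm_smul, Real.norm_eq_abs, abs_of_nonneg (pow_nonneg hs0.le m)]
    calc s ^ m * ‖(F+T) ^ m‖ ≤ s ^ m * (CA * r' ^ m) :=
          mul_le_mul_of_nonneg_left (hCA m) (pow_nonneg hs0.le m)
    _ = CA * (s * r') ^ m := by rw [mul_pow]; ring
  have h9 : rho (s • (F+T)) ≤ ENNReal.ofReal (s * r') :=
    rho_le_of_pow_norm_le hCA1 (by positivity) hbound
  have h10 : ENNReal.ofReal (s * r') < 1 := ENNReal.ofReal_lt_one.2 hsr'
  exact absurd (lt_of_le_of_lt (le_trans h7 h9) h10) (lt_irrefl _)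

end Main

end SignR0Aux




open SignR0Aux in
/-- For entrywise nonnegative `F`, `T` with the spectral radius of `T` below `1`,
the basic reproduction number `ℛ₀` (spectral radius of the NGM with large domain
`F(I-T)⁻¹`) and the real-time growth rate `ρ` (spectral radius of `F + T`) satisfy
`sign(ℛ₀ - 1) = sign(ρ - 1)`. -/
theorem sign_R0_equals_sign_growth
    (n : ℕ) (F T : Matrix (Fin n) (Fin n) ℝ)
    (hF : ∀ i j, 0 ≤ F i j) (hTpos : ∀ i j, 0 ≤ T i j)
    (hT : spectralRadius ℂ (T.map (Complex.ofReal : ℝ → ℂ)) < 1) :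
    (1 < spectralRadius ℂ (((F + T)).map (Complex.ofReal : ℝ → ℂ)) ↔
      1 < spectralRadius ℂ ((F * (1 - T)⁻¹).map (Complex.ofReal : ℝ → ℂ))) ∧
    (spectralRadius ℂ (((F + T)).map (Complex.ofReal : ℝ → ℂ)) = 1 ↔
      spectralRadius ℂ ((F * (1 - T)⁻¹).map (Complex.ofReal : ℝ → ℂ)) = 1) ∧
    (spectralRadius ℂ (((F + T)).map (Complex.ofReal : ℝ → ℂ)) < 1 ↔
      spectralRadius ℂ ((F * (1 - T)⁻¹).map (Complex.ofReal : ℝ → ℂ)) < 1) := by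
  rcases Nat.eq_zero_or_pos n with rfl | hn
  · have hsub : Subsingleton (Matrix (Fin 0) (Fin 0) ℂ) :=
      ⟨fun a b => by ext i; exact i.elim0⟩
    have hempty : ∀ M : Matrix (Fin 0) (Fin 0) ℂ, spectralRadius ℂ M = 0 := by
      intro M
      have hsp : spectrum ℂ M = ∅ := by
        rw [Set.eq_empty_iff_forall_notMem]
        intro z hz
        exact (spectrum.mem_iff.1 hz) (@isUnit_of_subsingleton _ _ hsub _)
      simp [spectralRadius, hsp]
    rw [hempty, hempty]
    simp
  · haveI : NeZero n := ⟨hn.ne'⟩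
    have hrhoT : rho T < 1 := hT
    obtain ⟨C, θ, hC1, hθ0, hθ1, hb⟩ := exists_geom hrhoT
    have hinv : (1 - T)⁻¹ = matGeom T :=
      Matrix.inv_eq_right_inv (one_sub_mul_matGeom hTpos hθ0.le hθ1 hb)
    rw [hinv]
    have iff1 : (1 < rho (F + T) ↔ 1 < rho (F * matGeom T)) :=
      ⟨fun h => claim2fwd hF hTpos hrhoT h, fun h => claim2rev hF hTpos hrhoT h⟩
    have iff3 : (rho (F + T) < 1 ↔ rho (F * matGeom T) < 1) := by
      constructor
      · intro h
        by_contra hc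
        push_neg at hc
        exact absurd (lt_of_lt_of_le h (claim1fwd hF hTpos hrhoT hc)) (lt_irrefl _)
      · exact fun h => claim1rev hF hTpos hrhoT h
    refine ⟨iff1, ?_, iff3⟩
    constructor
    · intro hA
      rcases lt_trichotomy (rho (F * matGeom T)) 1 with hK | hK | hK
      · exact absurd (hA ▸ iff3.2 hK) (lt_irrefl _)
      · exact hK
      · exact absurd (hA ▸ iff1.2 hK) (lt_irrefl _)
    · intro hK
      rcases lt_trichotomy (rho (F + T)) 1 with hA | hA | hA
      · exact absurd (hK ▸ iff3.1 hA) (lt_irrefl _)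
      · exact hA
      · exact absurd (hK ▸ iff1.1 hA) (lt_irrefl _)
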